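/- Let α ∈ [1,∞), r > 0, and let X be a random vector in ℝ^d with ‖X‖ ≤ r almost surely. Then for every θ ∈ ℝ^d with ‖θ‖ ≤ r: (i) ‖E[σ(⟨θ, X⟩)^{1-1/α}·σ(-⟨θ, X⟩)·X] - E[X]‖ ≤ (1 - σ(-r²)²)·E[‖X‖]; and consequently (ii) if E[X] ≠ 0 and 1 - σ(-r²)² < ‖E[X]‖ / E[‖X‖], then ‖E[σ(⟨θ, X⟩)^{1-1/α}·σ(-⟨θ, X⟩)·X]‖ ≥ ‖E[X]‖ - (1 - σ(-r²)²)·E[‖X‖] > 0, i.e., this vector (which equals minus the gradient of the expected α-risk under the symmetry assumption of the logistic-regression model) never vanishes for θ in the ball of radius r. -/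

import Mathlib

open scoped RealInnerProductSpace
open MeasureTheory

/-- The sigmoid function `σ(z) = 1/(1+e^{-z})`. -/
noncomputable def sigmoid (z : ℝ) : ℝ := 1 / (1 + Real.exp (-z))

lemma sigmoid_pos (z : ℝ) : 0 < sigmoid z := by
  unfold sigmoid; positivity

lemma sigmoid_le_one (z : ℝ) : sigmoid z ≤ 1 := by
  unfold sigmoid
  rw [div_le_one (by positivity)]
  linarith [(Real.exp_pos (-z)).le]

lemma sigmoid_mono {z w : ℝ} (h : z ≤ w) : sigmoid z ≤ sigmoid w := by
  unfold sigmoid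
  apply one_div_le_one_div_of_le (by positivity)
  have := Real.exp_le_exp.mpr (neg_le_neg h)
  linarith

lemma continuous_sigmoid' : Continuous sigmoid := by
  unfold sigmoid
  exact continuous_const.div (by continuity) (fun z => by positivity)

lemma weight_bounds {α : ℝ} (hα : 1 ≤ α) {z r : ℝ} (hz : |z| ≤ r^2) :
    sigmoid (-(r^2)) ^ 2 ≤ sigmoid z ^ (1 - 1/α) * sigmoid (-z) ∧
    sigmoid z ^ (1 - 1/α) * sigmoid (-z) ≤ 1 := by
  have hα0 : (0:ℝ) < α := by linarith
  have hβ0 : 0 ≤ 1 - 1/α := by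
    have : 1/α ≤ 1 := by rw [div_le_one hα0]; linarith
    linarith
  have hβ1 : 1 - 1/α ≤ 1 := by
    have : 0 < 1/α := by positivity
    linarith
  have h1 : sigmoid z ≤ sigmoid z ^ (1 - 1/α) := by
    calc sigmoid z = sigmoid z ^ (1:ℝ) := (Real.rpow_one _).symm
    _ ≤ _ := Real.rpow_le_rpow_of_exponent_ge (sigmoid_pos z) (sigmoid_le_one z) hβ1
  have h2 : sigmoid z ^ (1 - 1/α) ≤ 1 :=
    Real.rpow_le_one (sigmoid_pos z).le (sigmoid_le_one z) hβ0
  obtain ⟨hzl, hzu⟩ := abs_le.mp hz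
  constructor
  · rw [sq]
    exact mul_le_mul (le_trans (sigmoid_mono (by linarith)) h1)
      (sigmoid_mono (by linarith)) (sigmoid_pos _).le
      (le_trans (sigmoid_pos z).le h1)
  · exact mul_le_one₀ h2 (sigmoid_pos _).le (sigmoid_le_one _)

/-- Let `α ∈ [1,∞)`, `r > 0`, and let `X` be a random vector in `ℝ^d` with `‖X‖ ≤ r`
a.s. Then for `‖θ‖ ≤ r`:
(i) `‖E[σ(⟪θ,X⟫)^{1-1/α}·σ(-⟪θ,X⟫)·X] - E[X]‖ ≤ (1-σ(-r²)²)·E[‖X‖]`; and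
(ii) if `E[X] ≠ 0` and `1-σ(-r²)² < ‖E[X]‖/E[‖X‖]`, then
`‖E[σ(⟪θ,X⟫)^{1-1/α}·σ(-⟪θ,X⟫)·X]‖ ≥ ‖E[X]‖ - (1-σ(-r²)²)·E[‖X‖] > 0`, i.e. this
vector (minus the gradient of the expected `α`-risk under the symmetry assumption)
never vanishes on the ball of radius `r`. -/
theorem weighted_mean_gradient_bound
    {Ω : Type*} [MeasurableSpace Ω] (μ : Measure Ω) [IsProbabilityMeasure μ]
    (d : ℕ) (α r : ℝ) (hα : 1 ≤ α) (hr : 0 < r)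
    (X : Ω → EuclideanSpace ℝ (Fin d)) (hXm : Measurable X)
    (hXr : ∀ᵐ ω ∂μ, ‖X ω‖ ≤ r)
    (θ : EuclideanSpace ℝ (Fin d)) (hθ : ‖θ‖ ≤ r) :
    ‖(∫ ω, (sigmoid ⟪θ, X ω⟫ ^ (1 - 1/α) * sigmoid (-⟪θ, X ω⟫)) • X ω ∂μ)
        - ∫ ω, X ω ∂μ‖
      ≤ (1 - sigmoid (-(r^2)) ^ 2) * ∫ ω, ‖X ω‖ ∂μ ∧
    ((∫ ω, X ω ∂μ) ≠ 0 →
      1 - sigmoid (-(r^2)) ^ 2 < ‖∫ ω, X ω ∂μ‖ / ∫ ω, ‖X ω‖ ∂μ →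
      ‖∫ ω, (sigmoid ⟪θ, X ω⟫ ^ (1 - 1/α) * sigmoid (-⟪θ, X ω⟫)) • X ω ∂μ‖
          ≥ ‖∫ ω, X ω ∂μ‖ - (1 - sigmoid (-(r^2)) ^ 2) * ∫ ω, ‖X ω‖ ∂μ ∧
        0 < ‖∫ ω, X ω ∂μ‖ - (1 - sigmoid (-(r^2)) ^ 2) * ∫ ω, ‖X ω‖ ∂μ) := by
  set w : Ω → ℝ := fun ω => sigmoid ⟪θ, X ω⟫ ^ (1 - 1/α) * sigmoid (-⟪θ, X ω⟫) with hw
  set c : ℝ := 1 - sigmoid (-(r^2)) ^ 2 with hc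
  have hc0 : 0 ≤ c := by
    have h1 : sigmoid (-(r^2)) ≤ 1 := sigmoid_le_one _
    have h2 : 0 < sigmoid (-(r^2)) := sigmoid_pos _
    have : sigmoid (-(r^2)) ^ 2 ≤ 1 := by nlinarith
    simp only [hc]; linarith
  -- a.e. bounds on w
  have hwb : ∀ᵐ ω ∂μ, sigmoid (-(r^2)) ^ 2 ≤ w ω ∧ w ω ≤ 1 := by
    filter_upwards [hXr] with ω hω
    have hz : |⟪θ, X ω⟫| ≤ r^2 := by
      calc |⟪θ, X ω⟫| ≤ ‖θ‖ * ‖X ω‖ := abs_real_inner_le_norm θ (X ω)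
        _ ≤ r * r := mul_le_mul hθ hω (norm_nonneg _) hr.le
        _ = r^2 := (sq r).symm
    exact weight_bounds hα hz
  -- measurability
  have hinner : Measurable fun ω => ⟪θ, X ω⟫ := by
    exact (measurable_const.inner hXm : Measurable fun ω => ⟪θ, X ω⟫)
  have hwm : Measurable w := by
    have hg : Continuous fun z : ℝ => sigmoid z ^ (1 - 1/α) * sigmoid (-z) :=
      (continuous_sigmoid'.rpow_const (fun z => Or.inl (sigmoid_pos z).ne')).mul
        (continuous_sigmoid'.comp continuous_neg)
    exact hg.measurable.comp hinner
  have hfm : Measurable fun ω => w ω • X ω := hwm.smul hXm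
  -- integrability
  have hX : Integrable X μ :=
    Integrable.mono' (integrable_const r) hXm.aestronglyMeasurable hXr
  have hXn : Integrable (fun ω => ‖X ω‖) μ := hX.norm
  have hf : Integrable (fun ω => w ω • X ω) μ := by
    apply Integrable.mono' hXn hfm.aestronglyMeasurable
    filter_upwards [hwb] with ω ⟨h1, h2⟩
    rw [norm_smul]
    have h0 : 0 ≤ w ω := le_trans (by positivity) h1
    calc ‖w ω‖ * ‖X ω‖ ≤ 1 * ‖X ω‖ := by
          apply mul_le_mul_of_nonneg_right _ (norm_nonneg _)
          rwa [Real.norm_eq_abs, abs_of_nonneg h0]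
      _ = ‖X ω‖ := one_mul _
  -- the key bound (i)
  have key : ‖(∫ ω, w ω • X ω ∂μ) - ∫ ω, X ω ∂μ‖ ≤ c * ∫ ω, ‖X ω‖ ∂μ := by
    rw [← integral_sub hf hX]
    calc ‖∫ ω, (w ω • X ω - X ω) ∂μ‖ ≤ ∫ ω, ‖w ω • X ω - X ω‖ ∂μ :=
          norm_integral_le_integral_norm _
      _ ≤ ∫ ω, c * ‖X ω‖ ∂μ := by
          apply integral_mono_ae ((hf.sub hX).norm) (hXn.const_mul c)
          filter_upwards [hwb] with ω ⟨h1, h2⟩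
          have h0 : 0 ≤ w ω := le_trans (by positivity) h1
          have heq : w ω • X ω - X ω = (w ω - 1) • X ω := by
            rw [sub_smul, one_smul]
          simp only [Pi.sub_apply]
          rw [heq, norm_smul, Real.norm_eq_abs, abs_of_nonpos (by linarith)]
          apply mul_le_mul_of_nonneg_right _ (norm_nonneg _)
          simp only [hc]; linarith
      _ = c * ∫ ω, ‖X ω‖ ∂μ := integral_const_mul c _
  refine ⟨key, fun hne hlt => ?_⟩
  have hIn : ‖∫ ω, X ω ∂μ‖ ≤ ∫ ω, ‖X ω‖ ∂μ := norm_integral_le_integral_norm _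
  have hInpos : 0 < ∫ ω, ‖X ω‖ ∂μ := by
    rcases lt_or_ge 0 (∫ ω, ‖X ω‖ ∂μ) with h | h
    · exact h
    · exfalso; apply hne
      have : ‖∫ ω, X ω ∂μ‖ ≤ 0 := le_trans hIn h
      simpa using norm_le_zero_iff.mp this
  have hmul : c * ∫ ω, ‖X ω‖ ∂μ < ‖∫ ω, X ω ∂μ‖ := by
    rw [← lt_div_iff₀ hInpos] at *
    exact hlt
  constructor
  · show ‖∫ ω, w ω • X ω ∂μ‖ ≥ ‖∫ ω, X ω ∂μ‖ - c * ∫ ω, ‖X ω‖ ∂μ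
    have h3 := norm_sub_norm_le (∫ ω, X ω ∂μ) (∫ ω, w ω • X ω ∂μ)
    rw [norm_sub_rev] at h3
    linarith
  · show 0 < ‖∫ ω, X ω ∂μ‖ - c * ∫ ω, ‖X ω‖ ∂μ
    linarith
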